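/- For every integer t > 2, the class T_t of thresholds over [t−1] is properly list replicable with proper list replicability number exactly 2: List_p(T_t) = 2. -/

import Mathlib

open scoped ENNReal Classical
set_option maxHeartbeats 1000000

namespace Replicability

variable {X : Type*}

/-- A labeled sample of size `n`: `n` pairs of a domain point and a boolean label
(`true` encodes `+1` and `false` encodes `-1`). -/
abbrev Sample (X : Type*) (n : ℕ) := Fin n → X × Bool

/-- A (possibly randomized) learning rule: for every sample size `n` it maps a sample of
size `n` to a probability distribution over output predictors `X → Bool`. -/
abbrev LearningRule (X : Type*) := (n : ℕ) → Sample X n → PMF (X → Bool)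

/-- The population loss `L_D(h) = Pr_{(x,y) ~ D}[h x ≠ y]` of a predictor `h` with
respect to a distribution `D` over labeled examples. -/
noncomputable def popLoss (D : PMF (X × Bool)) (h : X → Bool) : ℝ≥0∞ :=
  D.toOuterMeasure {p | h p.1 ≠ p.2}

/-- `D` is realizable by the hypothesis class `H`: `inf_{h ∈ H} L_D(h) = 0`. -/
def Realizable (H : Set (X → Bool)) (D : PMF (X × Bool)) : Prop :=
  ∀ ε : ℝ≥0∞, 0 < ε → ∃ h ∈ H, popLoss D h < ε

/-- The probability that, for an i.i.d. sample `S ~ D^n`, the (random) output of the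
learning rule `A` on `S` lands in the set `E` of predictors. -/
noncomputable def outProb (D : PMF (X × Bool)) {n : ℕ}
    (A : Sample X n → PMF (X → Bool)) (E : Set (X → Bool)) : ℝ≥0∞ :=
  ∑' S : Sample X n, (∏ i, D (S i)) * (A S).toOuterMeasure E

/-- `A` is an `(ε, ρ)`-globally stable learner for `H`: there is a sample size `n` such
that for every `H`-realizable `D` some predictor `h` with `L_D(h) ≤ ε` is output with
probability at least `ρ`. -/
def IsGSLearner (H : Set (X → Bool)) (A : LearningRule X) (ε ρ : ℝ) : Prop :=
  ∃ n : ℕ, ∀ D : PMF (X × Bool), Realizable H D →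
    ∃ h : X → Bool, popLoss D h ≤ ENNReal.ofReal ε ∧
      ENNReal.ofReal ρ ≤ outProb D (A n) {h}

/-- The global stability parameter `ρ(H)`. -/
noncomputable def globalStability (H : Set (X → Bool)) : ℝ :=
  sSup {ρ : ℝ | ρ ∈ Set.Icc (0 : ℝ) 1 ∧
    ∀ ε : ℝ, 0 < ε → ∃ A : LearningRule X, IsGSLearner H A ε ρ}

/-- The global stability parameter `ρ_F(H)` of `H` with respect to the output class `F`:
only learners all of whose outputs lie in `F` are considered. -/
noncomputable def globalStabilityIn (F H : Set (X → Bool)) : ℝ :=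
  sSup {ρ : ℝ | ρ ∈ Set.Icc (0 : ℝ) 1 ∧
    ∀ ε : ℝ, 0 < ε → ∃ A : LearningRule X,
      (∀ n S, (A n S).support ⊆ F) ∧ IsGSLearner H A ε ρ}

/-- `A` is an `(ε, L)`-list replicable learner for `H`: for every `δ > 0` there is a
sample size `n` such that for every `H`-realizable `D` there are predictors
`h_1, …, h_L`, each of population loss at most `ε`, such that the output of `A` is one
of them with probability at least `1 - δ`. -/
def IsListLearner (H : Set (X → Bool)) (A : LearningRule X) (ε : ℝ) (L : ℕ) : Prop :=
  ∀ δ : ℝ, 0 < δ → ∃ n : ℕ, ∀ D : PMF (X × Bool), Realizable H D →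
    ∃ hs : Fin L → (X → Bool),
      (∀ ℓ, popLoss D (hs ℓ) ≤ ENNReal.ofReal ε) ∧
      ENNReal.ofReal (1 - δ) ≤ outProb D (A n) (Set.range hs)

/-- The list replicability number `List(H)` (`⊤` if no finite list size works). -/
noncomputable def listNumber (H : Set (X → Bool)) : ℕ∞ :=
  sInf {L : ℕ∞ | ∃ l : ℕ, L = l ∧
    ∀ ε : ℝ, 0 < ε → ∃ A : LearningRule X, IsListLearner H A ε l}

/-- `A` is a proper learning rule for `H`: every output lies in `H`. -/
def IsProper (H : Set (X → Bool)) (A : LearningRule X) : Prop :=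
  ∀ n S, ((A n S).support : Set (X → Bool)) ⊆ H

/-- `A` is a proper `(ε, L)`-list replicable learner for `H`: a proper learning rule
whose lists consist of hypotheses from `H`. -/
def IsProperListLearner (H : Set (X → Bool)) (A : LearningRule X) (ε : ℝ) (L : ℕ) : Prop :=
  IsProper H A ∧
  ∀ δ : ℝ, 0 < δ → ∃ n : ℕ, ∀ D : PMF (X × Bool), Realizable H D →
    ∃ hs : Fin L → (X → Bool),
      (∀ ℓ, hs ℓ ∈ H) ∧
      (∀ ℓ, popLoss D (hs ℓ) ≤ ENNReal.ofReal ε) ∧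
      ENNReal.ofReal (1 - δ) ≤ outProb D (A n) (Set.range hs)

/-- The proper list replicability number `List_p(H)` (`⊤` if no finite list size works). -/
noncomputable def properListNumber (H : Set (X → Bool)) : ℕ∞ :=
  sInf {L : ℕ∞ | ∃ l : ℕ, L = l ∧
    ∀ ε : ℝ, 0 < ε → ∃ A : LearningRule X, IsProperListLearner H A ε l}

/-- `H` shatters the finite set `s`. -/
def Shatters (H : Set (X → Bool)) (s : Finset X) : Prop :=
  ∀ σ : X → Bool, ∃ h ∈ H, ∀ x ∈ s, h x = σ x

/-- The VC dimension of `H`, as an extended natural number. -/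
noncomputable def VCDim (H : Set (X → Bool)) : ℕ∞ :=
  sSup {d : ℕ∞ | ∃ s : Finset X, Shatters H s ∧ d = s.card}

/-- `H` shatters a complete binary mistake tree of depth `d`: there is an assignment of
a point to every binary string (only strings of length `< d` matter) such that every
branch `σ ∈ Bool^d` is realized by some `h ∈ H`. -/
def LdimGe (H : Set (X → Bool)) (d : ℕ) : Prop :=
  ∃ tree : List Bool → X, ∀ σ : Fin d → Bool, ∃ h ∈ H,
    ∀ j : Fin d, h (tree (List.ofFn fun i : Fin j => σ (Fin.castLE j.isLt.le i))) = σ j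

/-- The Littlestone dimension of `H`, as an extended natural number. -/
noncomputable def Ldim (H : Set (X → Bool)) : ℕ∞ :=
  sSup {d : ℕ∞ | ∃ k : ℕ, d = k ∧ LdimGe H k}

/-- The projection of `H` to the finite set `s` contains a hollow star centered at some
pattern `f`: `f` is not realized by `H` on `s`, but each of the `|s|` patterns obtained
from `f` by flipping one coordinate is. -/
def HasHollowStar (H : Set (X → Bool)) (s : Finset X) : Prop :=
  ∃ f : X → Bool,
    (¬ ∃ h ∈ H, ∀ x ∈ s, h x = f x) ∧
    ∀ x₀ ∈ s, ∃ h ∈ H, h x₀ = !(f x₀) ∧ ∀ x ∈ s, x ≠ x₀ → h x = f x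

/-- The hollow star number of `H`, as an extended natural number. -/
noncomputable def HSdim (H : Set (X → Bool)) : ℕ∞ :=
  sSup {d : ℕ∞ | ∃ s : Finset X, HasHollowStar H s ∧ d = s.card}

/-- The class of `t` thresholds `τ_i : [t-1] → {±1}`, `i ∈ [t]`, where (identifying
`[t-1]` with `Fin (t-1)` and `[t]` with `Fin t` via `x ↦ x + 1`) `τ_i x = +1` iff `x ≥ i`. -/
def thresholdClass (t : ℕ) : Set (Fin (t - 1) → Bool) :=
  {h | ∃ i : Fin t, h = fun x : Fin (t - 1) => decide ((i : ℕ) ≤ (x : ℕ))}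

/-- The class of `s` singletons over `[s]`: `h_i x = +1` iff `x = i`. -/
def singletonClass (s : ℕ) : Set (Fin s → Bool) :=
  {h | ∃ i : Fin s, h = fun x => decide (x = i)}

/-- The empirical loss of `h` on the sample `S`. -/
noncomputable def empLoss {n : ℕ} (S : Sample X n) (h : X → Bool) : ℝ :=
  (Finset.univ.filter fun i => h (S i).1 ≠ (S i).2).card / n

/-- The sample `S` is consistent with `H`. -/
def Consistent (H : Set (X → Bool)) {n : ℕ} (S : Sample X n) : Prop :=
  ∃ h ∈ H, ∀ i, h (S i).1 = (S i).2

/-- `A` is an `ε'`-empirical learner for `H`: for all large enough sample sizes, on every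
sample consistent with `H` and every internal randomness, the output has empirical loss
at most `ε'`. -/
def IsEmpiricalLearner (H : Set (X → Bool)) (A : LearningRule X) (ε' : ℝ) : Prop :=
  ∃ n₀ : ℕ, ∀ n > n₀, ∀ S : Sample X n, Consistent H S →
    ∀ f ∈ (A n S).support, empLoss S f ≤ ε'

/-- An instability witness of size `k` for `H` with respect to the output class `F`
(`true` encodes the label `+1` and `false` the label `-1`). -/
def IsInstabilityWitness (H F : Set (X → Bool)) (k : ℕ)
    (W : Fin k × Bool → X × Bool) : Prop :=
  (∃ xy : X × Bool, ∀ σ : Fin k → Bool, ∃ h ∈ H, h xy.1 = xy.2 ∧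
      ∀ j : Fin k, W (j, σ j) ≠ xy ∧ h (W (j, σ j)).1 = (W (j, σ j)).2) ∧
  (∃ F' : Fin (k + 1) → Set (X → Bool),
      (∀ i, F' i ⊆ F) ∧
      (∀ f ∈ F, ∃! i, f ∈ F' i) ∧
      (∀ j : Fin k, ∀ f₀ ∈ F' 0, f₀ (W (j, false)).1 ≠ (W (j, false)).2) ∧
      (∀ j : Fin k, ∀ f ∈ F' j.succ, f (W (j, true)).1 ≠ (W (j, true)).2))

/-- The total variation distance between two distributions over a countable set. -/
noncomputable def tvDist {α : Type*} (p q : PMF α) : ℝ :=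
  (∑' a, |(p a).toReal - (q a).toReal|) / 2


-- ===================== auxiliary development =====================
section Aux
open Finset
set_option linter.unusedSectionVars false

section Prob
variable {Z : Type*} [Fintype Z] [DecidableEq Z]
noncomputable def PR (D : PMF Z) {n : ℕ} (S : Fin n → Z) : ℝ := ∏ k, (D (S k)).toReal

lemma D_ne_top (D : PMF Z) (z : Z) : D z ≠ ⊤ :=
  ne_top_of_le_ne_top ENNReal.one_ne_top (D.coe_le_one z)

lemma sum_toReal_D (D : PMF Z) : ∑ z, (D z).toReal = 1 := by
  have h := D.tsum_coe
  rw [tsum_fintype] at h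
  rw [← ENNReal.toReal_sum (fun a _ => D_ne_top D a), h, ENNReal.toReal_one]

lemma PR_nonneg (D : PMF Z) {n : ℕ} (S : Fin n → Z) : 0 ≤ PR D S :=
  Finset.prod_nonneg fun _ _ => ENNReal.toReal_nonneg

lemma sum_prod_factorize {R : Type*} [CommSemiring R] {n : ℕ} (g : Fin n → Z → R) :
    ∑ S : Fin n → Z, ∏ k, g k (S k) = ∏ k, ∑ z, g k z := by
  rw [Finset.prod_univ_sum, Fintype.piFinset_univ]

lemma sum_PR (D : PMF Z) (n : ℕ) : ∑ S : Fin n → Z, PR D S = 1 := by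
  unfold PR
  rw [sum_prod_factorize (fun _ z => (D z).toReal)]
  simp [sum_toReal_D D]

lemma sum_WE (D : PMF Z) (n : ℕ) : ∑ S : Fin n → Z, (∏ k, D (S k)) = 1 := by
  rw [sum_prod_factorize (fun _ z => D z)]
  have h := D.tsum_coe
  rw [tsum_fintype] at h
  simp [h]

/-- second moment identity -/
lemma second_moment (D : PMF Z) (f : Z → ℝ) (hμ : ∑ z, (D z).toReal * f z = 0) (n : ℕ) :
    ∑ S : Fin n → Z, PR D S * (∑ k, f (S k))^2
      = n * (∑ z, (D z).toReal * (f z)^2) := by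
  have key : ∀ k k' : Fin n,
      (∑ S : Fin n → Z, PR D S * (f (S k) * f (S k')))
        = if k = k' then (∑ z, (D z).toReal * (f z)^2) else 0 := by
    intro k k'
    have hprod : ∀ S : Fin n → Z, PR D S * (f (S k) * f (S k'))
        = ∏ j, ((if j = k then f (S j) else 1) * (if j = k' then f (S j) else 1)
            * (D (S j)).toReal) := by
      intro S
      rw [Finset.prod_mul_distrib, Finset.prod_mul_distrib]
      rw [Finset.prod_ite_eq' Finset.univ k (fun j => f (S j))]
      rw [Finset.prod_ite_eq' Finset.univ k' (fun j => f (S j))]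
      simp [PR]; ring
    calc (∑ S : Fin n → Z, PR D S * (f (S k) * f (S k')))
        = ∑ S : Fin n → Z, ∏ j, ((if j = k then f (S j) else 1)
            * (if j = k' then f (S j) else 1) * (D (S j)).toReal) := by
          exact Finset.sum_congr rfl fun S _ => hprod S
      _ = ∏ j, ∑ z, ((if j = k then f z else 1) * (if j = k' then f z else 1)
            * (D z).toReal) := by
          exact sum_prod_factorize (fun j z => (if j = k then f z else 1) * (if j = k' then f z else 1) * (D z).toReal)
      _ = if k = k' then (∑ z, (D z).toReal * (f z)^2) else 0 := by
          by_cases hkk : k = k'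
          · subst hkk
            simp only [if_pos rfl]
            rw [Finset.prod_eq_single k]
            · apply Finset.sum_congr rfl; intro z _
              simp; ring
            · intro j _ hj
              simp only [if_neg hj, one_mul, mul_one]
              exact sum_toReal_D D
            · simp
          · rw [if_neg hkk]
            apply Finset.prod_eq_zero (Finset.mem_univ k)
            simp only [if_pos rfl, if_neg hkk]
            calc ∑ z, f z * 1 * (D z).toReal = ∑ z, (D z).toReal * f z := by
                  apply Finset.sum_congr rfl; intro z _; ring
              _ = 0 := hμ
  calc ∑ S : Fin n → Z, PR D S * (∑ k, f (S k))^2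
      = ∑ S : Fin n → Z, ∑ k, ∑ k', PR D S * (f (S k) * f (S k')) := by
        apply Finset.sum_congr rfl; intro S _
        rw [sq, Finset.sum_mul_sum]
        rw [Finset.mul_sum]
        apply Finset.sum_congr rfl; intro k _
        rw [Finset.mul_sum]
    _ = ∑ k : Fin n, ∑ k' : Fin n, ∑ S : Fin n → Z, PR D S * (f (S k) * f (S k')) := by
        rw [Finset.sum_comm]
        apply Finset.sum_congr rfl; intro k _
        rw [Finset.sum_comm]
    _ = ∑ k : Fin n, ∑ k' : Fin n, if k = k' then (∑ z, (D z).toReal * (f z)^2) else 0 := by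
        apply Finset.sum_congr rfl; intro k _
        apply Finset.sum_congr rfl; intro k' _
        exact key k k'
    _ = n * (∑ z, (D z).toReal * (f z)^2) := by
        simp [Finset.sum_ite_eq]
/-- Chebyshev deviation bound for the empirical frequency of `W`. -/
lemma chebyshev (D : PMF Z) (W : Finset Z) {n : ℕ} (hn : 0 < n) {η : ℝ} (hη : 0 < η)
    (B : Finset (Fin n → Z))
    (hB : ∀ S ∈ B, η < |(∑ k, if S k ∈ W then (1:ℝ) else 0) / n - ∑ z ∈ W, (D z).toReal|) :
    ∑ S ∈ B, PR D S ≤ 1 / (4 * n * η^2) := by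
  set p : ℝ := ∑ z ∈ W, (D z).toReal with hp
  set f : Z → ℝ := fun z => (if z ∈ W then (1:ℝ) else 0) - p with hf
  have hDz : ∀ z, (0:ℝ) ≤ (D z).toReal := fun z => ENNReal.toReal_nonneg
  have hindsum : ∑ z, (D z).toReal * (if z ∈ W then (1:ℝ) else 0) = p := by
    simp only [mul_ite, mul_one, mul_zero]
    rw [Finset.sum_ite_mem]
    simp [hp]
  have hμ : ∑ z, (D z).toReal * f z = 0 := by
    simp only [hf, mul_sub]
    rw [Finset.sum_sub_distrib, hindsum, ← Finset.sum_mul, sum_toReal_D D]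
    ring
  have hp0 : 0 ≤ p := Finset.sum_nonneg fun z _ => hDz z
  have hp1 : p ≤ 1 := by
    rw [← sum_toReal_D D]
    exact Finset.sum_le_sum_of_subset_of_nonneg (Finset.subset_univ W) (fun z _ _ => hDz z)
  have hEf2 : ∑ z, (D z).toReal * (f z)^2 = p - p^2 := by
    have : ∀ z, (D z).toReal * (f z)^2
        = (D z).toReal * (if z ∈ W then (1:ℝ) else 0) * (1 - 2*p) + (D z).toReal * p^2 := by
      intro z
      by_cases h : z ∈ W <;> simp [hf, h] <;> ring
    rw [Finset.sum_congr rfl (fun z _ => this z), Finset.sum_add_distrib, ← Finset.sum_mul,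
      hindsum, ← Finset.sum_mul, sum_toReal_D D]
    ring
  have hQ := second_moment D f hμ n
  -- bound each bad term
  have hcnt : ∀ S : Fin n → Z, (∑ k, f (S k)) = (∑ k, if S k ∈ W then (1:ℝ) else 0) - n * p := by
    intro S
    simp only [hf]
    rw [Finset.sum_sub_distrib]
    simp [Finset.card_univ, mul_comm]
  have hnR : (0:ℝ) < n := by exact_mod_cast hn
  have key : ∀ S ∈ B,
      PR D S ≤ PR D S * (∑ k, f (S k))^2 / (n*η)^2 := by
    intro S hS
    have hS2 := hB S hS
    have h2 : (n*η)^2 < (∑ k, f (S k))^2 := by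
      rw [hcnt S]
      have habs : n * η < |(∑ k, (if S k ∈ W then (1:ℝ) else 0)) - n * p| := by
        have : |(∑ k, (if S k ∈ W then (1:ℝ) else 0)) - n * p| 
            = n * |(∑ k, (if S k ∈ W then (1:ℝ) else 0)) / n - p| := by
          rw [abs_sub_comm, ← abs_of_pos hnR, ← abs_mul, abs_sub_comm]
          congr 1
          field_simp
          rw [abs_of_pos hnR]; ring
        rw [this]
        exact (mul_lt_mul_iff_right₀ hnR).mpr hS2
      calc (n*η)^2 < |(∑ k, (if S k ∈ W then (1:ℝ) else 0)) - n * p|^2 := by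
            apply sq_lt_sq' <;> nlinarith [abs_nonneg ((∑ k, (if S k ∈ W then (1:ℝ) else 0)) - n * p)]
        _ = _ := sq_abs _
    have hsq : (0:ℝ) < (n*η)^2 := by positivity
    rw [le_div_iff₀ hsq]
    nlinarith [PR_nonneg D S]
  calc ∑ S ∈ B, PR D S
      ≤ ∑ S ∈ B, PR D S * (∑ k, f (S k))^2 / (n*η)^2 := Finset.sum_le_sum key
    _ ≤ ∑ S : Fin n → Z, PR D S * (∑ k, f (S k))^2 / (n*η)^2 := by
        apply Finset.sum_le_sum_of_subset_of_nonneg (Finset.subset_univ _)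
        intro S _ _
        exact div_nonneg (mul_nonneg (PR_nonneg D S) (sq_nonneg _)) (sq_nonneg _)
    _ = (n * (p - p^2)) / (n*η)^2 := by
        rw [← Finset.sum_div, hQ, hEf2]
    _ ≤ ((n:ℝ) * (1/4)) / (n*η)^2 := by
        gcongr
        nlinarith [sq_nonneg (p - 1/2)]
    _ = 1 / (4 * n * η^2) := by
        have hn0 : (n:ℝ) ≠ 0 := ne_of_gt hnR
        have hη0 : η ≠ 0 := ne_of_gt hη
        field_simp


end Prob

section Union
variable {α : Type*} [Fintype α]
lemma union_bound (w : α → ℝ) (hw : ∀ a, 0 ≤ w a) (P : ℕ → α → Prop) (m : ℕ) :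
    ∑ a ∈ Finset.univ.filter (fun a => ∃ i ∈ Finset.range m, P i a), w a
      ≤ ∑ i ∈ Finset.range m, ∑ a ∈ Finset.univ.filter (P i), w a := by
  induction m with
  | zero => simp
  | succ m ih =>
    rw [Finset.range_add_one]
    have hsplit : Finset.univ.filter (fun a => ∃ i ∈ insert m (Finset.range m), P i a)
        ⊆ Finset.univ.filter (P m) ∪ Finset.univ.filter (fun a => ∃ i ∈ Finset.range m, P i a) := by
      intro a ha
      rw [Finset.mem_filter] at ha
      obtain ⟨-, i, hi, hPi⟩ := ha
      rw [Finset.mem_insert] at hi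
      rcases hi with rfl | hi
      · exact Finset.mem_union_left _ (by simp [hPi])
      · exact Finset.mem_union_right _ (by exact Finset.mem_filter.mpr ⟨Finset.mem_univ a, ⟨i, hi, hPi⟩⟩)
    calc ∑ a ∈ Finset.univ.filter (fun a => ∃ i ∈ insert m (Finset.range m), P i a), w a
        ≤ ∑ a ∈ (Finset.univ.filter (P m) ∪ Finset.univ.filter (fun a => ∃ i ∈ Finset.range m, P i a)), w a :=
          Finset.sum_le_sum_of_subset_of_nonneg hsplit (fun a _ _ => hw a)
      _ ≤ ∑ a ∈ Finset.univ.filter (P m), w a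
            + ∑ a ∈ Finset.univ.filter (fun a => ∃ i ∈ Finset.range m, P i a), w a := by
          rw [← Finset.sum_union_inter]
          have : 0 ≤ ∑ a ∈ (Finset.univ.filter (P m) ∩ Finset.univ.filter (fun a => ∃ i ∈ Finset.range m, P i a)), w a :=
            Finset.sum_nonneg (fun a _ => hw a)
          linarith
      _ ≤ ∑ a ∈ Finset.univ.filter (P m), w a + ∑ i ∈ Finset.range m, ∑ a ∈ Finset.univ.filter (P i), w a := by
          linarith [ih]
      _ = ∑ i ∈ insert m (Finset.range m), ∑ a ∈ Finset.univ.filter (P i), w a := by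
          rw [Finset.sum_insert (by simp)]

end Union

section TV
variable {Z : Type*} [Fintype Z]
lemma sum_prod_factorize' {R : Type*} [CommSemiring R] {n : ℕ} (g : Fin n → Z → R) :
    ∑ S : Fin n → Z, ∏ k, g k (S k) = ∏ k, ∑ z, g k z := by
  rw [Finset.prod_univ_sum, Fintype.piFinset_univ]

/-- total-variation style bound for product distributions -/
lemma tv_prod (n : ℕ) (a b : Z → ℝ) (ha0 : ∀ z, 0 ≤ a z) (hb0 : ∀ z, 0 ≤ b z)
    (ha1 : ∑ z, a z = 1) (hb1 : ∑ z, b z = 1) :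
    ∑ S : Fin n → Z, |∏ k, a (S k) - ∏ k, b (S k)| ≤ n * ∑ z, |a z - b z| := by
  induction n with
  | zero => simp
  | succ n ih =>
    push_cast
    have htv0 : 0 ≤ ∑ z, |a z - b z| := Finset.sum_nonneg fun z _ => abs_nonneg _
    have hreidx : ∑ S : Fin (n+1) → Z, |∏ k, a (S k) - ∏ k, b (S k)|
        = ∑ y : Z × (Fin n → Z), |∏ k, a ((Fin.cons y.1 y.2 : Fin (n+1) → Z) k)
            - ∏ k, b ((Fin.cons y.1 y.2 : Fin (n+1) → Z) k)| := by
      apply Fintype.sum_equiv (Fin.consEquiv (fun _ => Z)).symm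
      intro S
      have h := (Fin.consEquiv (fun _ : Fin (n+1) => Z)).apply_symm_apply S
      congr 1 <;> rw [← h] <;> rfl
    rw [hreidx, Fintype.sum_prod_type]
    have hterm : ∀ (z : Z) (S' : Fin n → Z),
        |∏ k, a ((Fin.cons z S' : Fin (n+1) → Z) k) - ∏ k, b ((Fin.cons z S' : Fin (n+1) → Z) k)|
          ≤ a z * |∏ k, a (S' k) - ∏ k, b (S' k)| + |a z - b z| * ∏ k, b (S' k) := by
      intro z S'
      have hA : ∏ k, a ((Fin.cons z S' : Fin (n+1) → Z) k) = a z * ∏ k, a (S' k) := by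
        rw [Fin.prod_univ_succ]
        simp
      have hB : ∏ k, b ((Fin.cons z S' : Fin (n+1) → Z) k) = b z * ∏ k, b (S' k) := by
        rw [Fin.prod_univ_succ]
        simp
      rw [hA, hB]
      have : a z * ∏ k, a (S' k) - b z * ∏ k, b (S' k)
          = a z * (∏ k, a (S' k) - ∏ k, b (S' k)) + (a z - b z) * ∏ k, b (S' k) := by ring
      rw [this]
      calc |a z * (∏ k, a (S' k) - ∏ k, b (S' k)) + (a z - b z) * ∏ k, b (S' k)|
          ≤ |a z * (∏ k, a (S' k) - ∏ k, b (S' k))| + |(a z - b z) * ∏ k, b (S' k)| := abs_add_le _ _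
        _ = a z * |∏ k, a (S' k) - ∏ k, b (S' k)| + |a z - b z| * ∏ k, b (S' k) := by
            rw [abs_mul, abs_mul, abs_of_nonneg (ha0 z),
              abs_of_nonneg (Finset.prod_nonneg fun k _ => hb0 _)]
    calc ∑ z, ∑ S' : Fin n → Z, |∏ k, a ((Fin.cons z S' : Fin (n+1) → Z) k)
            - ∏ k, b ((Fin.cons z S' : Fin (n+1) → Z) k)|
        ≤ ∑ z, ∑ S' : Fin n → Z,
            (a z * |∏ k, a (S' k) - ∏ k, b (S' k)| + |a z - b z| * ∏ k, b (S' k)) := by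
          apply Finset.sum_le_sum; intro z _
          apply Finset.sum_le_sum; intro S' _
          exact hterm z S'
      _ = (∑ z, a z * (∑ S' : Fin n → Z, |∏ k, a (S' k) - ∏ k, b (S' k)|))
            + (∑ z, |a z - b z| * (∑ S' : Fin n → Z, ∏ k, b (S' k))) := by
          rw [← Finset.sum_add_distrib]
          apply Finset.sum_congr rfl; intro z _
          rw [Finset.sum_add_distrib, Finset.mul_sum, Finset.mul_sum]
      _ ≤ (∑ z, a z * (n * ∑ w, |a w - b w|)) + (∑ z, |a z - b z| * 1) := by
          apply add_le_add
          · apply Finset.sum_le_sum; intro z _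
            exact mul_le_mul_of_nonneg_left (ih) (ha0 z)
          · apply Finset.sum_le_sum; intro z _
            apply mul_le_mul_of_nonneg_left _ (abs_nonneg _)
            rw [sum_prod_factorize' (fun _ z => b z)]
            simp [hb1]
      _ ≤ ((n:ℝ)+1) * ∑ z, |a z - b z| := by
          rw [← Finset.sum_mul, ha1]
          push_cast
          ring_nf
          exact le_refl _

end TV

section Thr
variable (t : ℕ)
/-- threshold hypothesis with clamped index -/
def thr (k : ℕ) : Fin (t-1) → Bool := fun x => decide (min k (t-1) ≤ (x : ℕ))

lemma thr_mem (ht : 0 < t) (k : ℕ) : thr t k ∈ thresholdClass t := by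
  refine ⟨⟨min k (t-1), by omega⟩, ?_⟩
  funext x
  simp [thr]

lemma popLoss_eq_sum {t : ℕ} (D : PMF (Fin (t-1) × Bool)) (h : Fin (t-1) → Bool) :
    popLoss D h = ∑ z : Fin (t-1) × Bool, if h z.1 ≠ z.2 then D z else 0 := by
  unfold popLoss
  rw [PMF.toOuterMeasure_apply, tsum_fintype]
  apply Finset.sum_congr rfl
  intro z _
  rw [Set.indicator_apply]
  simp only [Set.mem_setOf_eq]

/-- sample points of label `false` at position `≥ i` -/
def Wneg (i : ℕ) : Finset (Fin (t-1) × Bool) :=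
  Finset.univ.filter (fun z => z.2 = false ∧ i ≤ (z.1 : ℕ))

noncomputable def TR (D : PMF (Fin (t-1) × Bool)) (i : ℕ) : ℝ := ∑ z ∈ Wneg t i, (D z).toReal

lemma TR_nonneg (D) (i : ℕ) : 0 ≤ TR t D i :=
  Finset.sum_nonneg fun _ _ => ENNReal.toReal_nonneg

lemma TR_antitone (D) {i j : ℕ} (hij : i ≤ j) : TR t D j ≤ TR t D i := by
  apply Finset.sum_le_sum_of_subset_of_nonneg
  · intro z hz
    rw [Wneg, Finset.mem_filter] at *
    exact ⟨hz.1, hz.2.1, le_trans hij hz.2.2⟩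
  · intro _ _ _; exact ENNReal.toReal_nonneg

lemma exists_zero_loss (ht : 0 < t) (D : PMF (Fin (t-1) × Bool))
    (hD : Realizable (thresholdClass t) D) :
    ∃ m : Fin t, popLoss D (fun x => decide ((m:ℕ) ≤ (x:ℕ))) = 0 := by
  by_contra hc
  push_neg at hc
  have hne : (Finset.univ : Finset (Fin t)).Nonempty := ⟨⟨0, ht⟩, Finset.mem_univ _⟩
  set ε₀ := Finset.univ.inf' hne
    (fun m : Fin t => popLoss D (fun x => decide ((m:ℕ) ≤ (x:ℕ)))) with hε₀
  have hpos : 0 < ε₀ := by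
    rw [hε₀, Finset.lt_inf'_iff]
    intro m _
    exact pos_iff_ne_zero.mpr (hc m)
  obtain ⟨h, hmem, hlt⟩ := hD ε₀ hpos
  obtain ⟨i, rfl⟩ := hmem
  have hle := Finset.inf'_le
    (fun m : Fin t => popLoss D (fun x => decide ((m:ℕ) ≤ (x:ℕ)))) (Finset.mem_univ i)
  exact absurd hlt (not_lt.mpr hle)

lemma zero_loss_apply {t : ℕ} {D : PMF (Fin (t-1) × Bool)} {m : Fin t}
    (hm : popLoss D (fun x => decide ((m:ℕ) ≤ (x:ℕ))) = 0)
    (z : Fin (t-1) × Bool) (hz : decide ((m:ℕ) ≤ (z.1:ℕ)) ≠ z.2) : D z = 0 := by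
  rw [popLoss_eq_sum] at hm
  have := (Finset.sum_eq_zero_iff.mp hm) z (Finset.mem_univ z)
  rwa [if_pos hz] at this

lemma TR_witness_zero {t : ℕ} {D : PMF (Fin (t-1) × Bool)} {m : Fin t}
    (hm : popLoss D (fun x => decide ((m:ℕ) ≤ (x:ℕ))) = 0) : TR t D (m:ℕ) = 0 := by
  apply Finset.sum_eq_zero
  intro z hz
  rw [Wneg, Finset.mem_filter] at hz
  obtain ⟨-, h2, h3⟩ := hz
  have : D z = 0 := by
    apply zero_loss_apply hm
    rw [h2]
    simp [h3]
  simp [this]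

lemma sumW_ne_top {t : ℕ} (D : PMF (Fin (t-1) × Bool)) (W : Finset (Fin (t-1) × Bool)) :
    ∑ z ∈ W, D z ≠ ⊤ := by
  have h1 : ∑ z ∈ W, D z ≤ ∑ z, D z :=
    Finset.sum_le_sum_of_subset (Finset.subset_univ W)
  have h2 : ∑ z : Fin (t-1) × Bool, D z = 1 := by
    have := D.tsum_coe
    rwa [tsum_fintype] at this
  exact ne_top_of_le_ne_top (by rw [h2]; exact ENNReal.one_ne_top) h1

lemma sumW_eq_ofReal_TR {t : ℕ} (D : PMF (Fin (t-1) × Bool)) (i : ℕ) :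
    ∑ z ∈ Wneg t i, D z = ENNReal.ofReal (TR t D i) := by
  rw [TR, ← ENNReal.toReal_sum (fun z _ => D_ne_top D z)]
  exact (ENNReal.ofReal_toReal (sumW_ne_top D _)).symm

/-- key loss bound: `⟦m₂ ≤ j ≤ m` and `TR j ≤ c⟧ → popLoss (thr j) ≤ ofReal c` -/
lemma loss_le {t : ℕ} (ht : 0 < t) {D : PMF (Fin (t-1) × Bool)} {m : Fin t}
    (hm : popLoss D (fun x => decide ((m:ℕ) ≤ (x:ℕ))) = 0)
    {j : ℕ} (hjm : j ≤ (m:ℕ)) :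
    popLoss D (thr t j) ≤ ENNReal.ofReal (TR t D j) := by
  have hthr : thr t j = fun x : Fin (t-1) => decide (j ≤ (x:ℕ)) := by
    funext x
    have hj' : min j (t-1) = j := min_eq_left (by omega)
    simp [thr, hj']
  rw [hthr, popLoss_eq_sum, ← sumW_eq_ofReal_TR]
  have key : ∀ z : Fin (t-1) × Bool,
      (if (decide (j ≤ (z.1:ℕ)) ≠ z.2) then D z else 0) ≤ (if z ∈ Wneg t j then D z else 0) := by
    intro z
    by_cases herr : decide (j ≤ (z.1:ℕ)) ≠ z.2
    · rw [if_pos herr]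
      rcases Bool.eq_false_or_eq_true z.2 with hz2 | hz2
      · -- label true: z.1 < j ≤ m, so D z = 0
        rw [hz2] at herr
        have hj : ¬ (j ≤ (z.1:ℕ)) := by simpa using herr
        have hz0 : D z = 0 := by
          apply zero_loss_apply hm
          rw [hz2]
          simp only [ne_eq, decide_eq_true_eq]
          omega
        rw [hz0]
        exact zero_le
      · -- label false: must be j ≤ z.1, so in Wneg
        rw [hz2] at herr
        have hj : j ≤ (z.1 : ℕ) := by simpa using herr
        have : z ∈ Wneg t j := by
          rw [Wneg, Finset.mem_filter]
          exact ⟨Finset.mem_univ z, hz2, hj⟩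
        rw [if_pos this]
    · rw [if_neg herr]
      exact zero_le
  calc ∑ z : Fin (t-1) × Bool, (if (decide (j ≤ (z.1:ℕ)) ≠ z.2) then D z else 0)
      ≤ ∑ z : Fin (t-1) × Bool, (if z ∈ Wneg t j then D z else 0) := Finset.sum_le_sum fun z _ => key z
    _ = ∑ z ∈ Wneg t j, D z := by rw [Finset.sum_ite_mem]; simp


end Thr

section Up
variable (t : ℕ) (ε : ℝ)
noncomputable def eP : ℝ := min ε (1/2)
noncomputable def etaP : ℝ := eP ε / (32 * t)
noncomputable def dgap : ℝ := eP ε / 2 - eP ε / (16 * t)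
noncomputable def phi (p : ℝ) : ℝ := max 0 (min 1 ((eP ε - etaP t ε - p) / dgap t ε))

variable {t ε}

lemma eP_pos (hε : 0 < ε) : 0 < eP ε := lt_min hε (by norm_num)
lemma eP_le : eP ε ≤ ε := min_le_left _ _
lemma etaP_pos (ht : 2 < t) (hε : 0 < ε) : 0 < etaP t ε := by
  apply div_pos (eP_pos hε)
  have : (0:ℝ) < t := by exact_mod_cast (by omega : 0 < t)
  linarith
lemma dgap_ge (ht : 2 < t) (hε : 0 < ε) : eP ε / 4 ≤ dgap t ε := by
  have htR : (3:ℝ) ≤ t := by exact_mod_cast ht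
  have he := eP_pos (ε := ε) hε
  have h48 : eP ε / (16*t) ≤ eP ε / 48 := by
    apply div_le_div_of_nonneg_left he.le (by norm_num) (by linarith)
  rw [dgap]
  linarith
lemma dgap_pos (ht : 2 < t) (hε : 0 < ε) : 0 < dgap t ε :=
  lt_of_lt_of_le (div_pos (eP_pos hε) (by norm_num)) (dgap_ge ht hε)
lemma two_eta (ht : 2 < t) : eP ε - etaP t ε - (eP ε/2 + etaP t ε) = dgap t ε := by
  have htR : (0:ℝ) < t := by exact_mod_cast (by omega : 0 < t)
  rw [etaP, dgap]
  field_simp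
  ring

lemma phi_nonneg (p : ℝ) : 0 ≤ phi t ε p := le_max_left _ _
lemma phi_le_one (p : ℝ) : phi t ε p ≤ 1 := max_le (by norm_num) (min_le_left _ _)
lemma phi_one (ht : 2 < t) (hε : 0 < ε) {p : ℝ} (hp : p ≤ eP ε/2 + etaP t ε) :
    phi t ε p = 1 := by
  have hd := dgap_pos ht hε
  have hr : 1 ≤ (eP ε - etaP t ε - p) / dgap t ε := by
    rw [le_div_iff₀ hd, one_mul]
    have := two_eta (ε := ε) ht
    linarith
  rw [phi, min_eq_left hr]
  exact max_eq_right (by norm_num)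
lemma phi_zero (ht : 2 < t) (hε : 0 < ε) {p : ℝ} (hp : eP ε - etaP t ε ≤ p) :
    phi t ε p = 0 := by
  have hd := dgap_pos ht hε
  have hr : (eP ε - etaP t ε - p) / dgap t ε ≤ 0 :=
    div_nonpos_of_nonpos_of_nonneg (by linarith) hd.le
  rw [phi]
  exact max_eq_left (le_trans (min_le_right _ _) hr)
lemma phi_lip (ht : 2 < t) (hε : 0 < ε) (a b : ℝ) :
    |phi t ε a - phi t ε b| ≤ |a - b| / dgap t ε := by
  have hd := dgap_pos ht hε
  rw [phi, phi]
  calc |max 0 (min 1 ((eP ε - etaP t ε - a) / dgap t ε))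
        - max 0 (min 1 ((eP ε - etaP t ε - b) / dgap t ε))|
      ≤ |min 1 ((eP ε - etaP t ε - a) / dgap t ε)
          - min 1 ((eP ε - etaP t ε - b) / dgap t ε)| := by
        rw [max_comm 0 _, max_comm 0 _]
        exact abs_max_sub_max_le_abs _ _ _
    _ ≤ |(eP ε - etaP t ε - a) / dgap t ε - (eP ε - etaP t ε - b) / dgap t ε| := by
        have := abs_min_sub_min_le_max (1:ℝ) ((eP ε - etaP t ε - a) / dgap t ε)
          (1:ℝ) ((eP ε - etaP t ε - b) / dgap t ε)
        simpa using this
    _ = |a - b| / dgap t ε := by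
        rw [div_sub_div_same, abs_div, abs_of_pos hd]
        congr 1
        rw [abs_sub_comm]
        congr 1
        ring

variable (t ε)

noncomputable def cnt (i : ℕ) {n : ℕ} (S : Sample (Fin (t-1)) n) : ℝ :=
  ∑ k, if S k ∈ Wneg t i then (1:ℝ) else 0
noncomputable def hatT (i : ℕ) {n : ℕ} (S : Sample (Fin (t-1)) n) : ℝ := cnt t i S / n
noncomputable def chat {n : ℕ} (S : Sample (Fin (t-1)) n) : ℝ :=
  ∑ i ∈ Finset.range t, phi t ε (hatT t i S)
noncomputable def ctrue (D : PMF (Fin (t-1) × Bool)) : ℝ :=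
  ∑ i ∈ Finset.range t, phi t ε (TR t D i)
noncomputable def outIdx {n : ℕ} (S : Sample (Fin (t-1)) n) : ℕ := t - (⌈chat t ε S⌉).toNat
noncomputable def algo : LearningRule (Fin (t-1)) :=
  fun _ S => PMF.pure (thr t (outIdx t ε S))

noncomputable def m1 (D : PMF (Fin (t-1) × Bool)) : ℕ := sInf {i | TR t D i ≤ eP ε/2}
noncomputable def m2 (D : PMF (Fin (t-1) × Bool)) : ℕ := sInf {i | TR t D i < eP ε}

variable {t ε}

section WithWitness
variable (ht : 2 < t) (hε : 0 < ε) {D : PMF (Fin (t-1) × Bool)} {m : Fin t}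
  (hm : popLoss D (fun x => decide ((m:ℕ) ≤ (x:ℕ))) = 0)

include ht hε hm

lemma m1_ex : (m:ℕ) ∈ {i | TR t D i ≤ eP ε/2} := by
  have h0 := TR_witness_zero hm
  simp only [Set.mem_setOf_eq, h0]
  have := eP_pos (ε := ε) hε
  linarith
lemma m1_le : m1 t ε D ≤ (m:ℕ) := Nat.sInf_le (m1_ex ht hε hm)
lemma m1_spec : TR t D (m1 t ε D) ≤ eP ε/2 := Nat.sInf_mem ⟨(m:ℕ), m1_ex ht hε hm⟩
lemma m2_le_m1 : m2 t ε D ≤ m1 t ε D := by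
  apply Nat.sInf_le
  have := m1_spec ht hε hm
  have he := eP_pos (ε := ε) hε
  simp only [Set.mem_setOf_eq]
  linarith
lemma m2_spec : TR t D (m2 t ε D) < eP ε := by
  have h0 := TR_witness_zero hm
  have hmem : (m:ℕ) ∈ {i | TR t D i < eP ε} := by
    simp only [Set.mem_setOf_eq, h0]
    exact eP_pos hε
  have h2 : m2 t ε D ∈ {i | TR t D i < eP ε} := Nat.sInf_mem ⟨_, hmem⟩
  exact h2
lemma m2_min {i : ℕ} (hi : i < m2 t ε D) : eP ε ≤ TR t D i := by
  have := Nat.notMem_of_lt_sInf hi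
  simp only [Set.mem_setOf_eq, not_lt] at this
  exact this

/-- generic bound for the rounded sums -/
lemma csum_bounds (F : ℕ → ℝ)
    (h1 : ∀ i, m1 t ε D ≤ i → i < t → phi t ε (F i) = 1)
    (h0 : ∀ i, i < m2 t ε D → phi t ε (F i) = 0) :
    (t:ℝ) - m1 t ε D ≤ ∑ i ∈ Finset.range t, phi t ε (F i) ∧
    ∑ i ∈ Finset.range t, phi t ε (F i) ≤ (t:ℝ) - m2 t ε D := by
  have hm1t : m1 t ε D ≤ t - 1 := le_trans (m1_le ht hε hm) (by omega)
  have hm2t : m2 t ε D ≤ t := le_trans (le_trans (m2_le_m1 ht hε hm) hm1t) (by omega)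
  constructor
  · calc (t:ℝ) - m1 t ε D = ((t - m1 t ε D : ℕ) : ℝ) := by
          rw [Nat.cast_sub (by omega : m1 t ε D ≤ t)]
      _ = ∑ i ∈ Finset.Ico (m1 t ε D) t, (1:ℝ) := by
          rw [Finset.sum_const, Nat.card_Ico]
          simp
      _ = ∑ i ∈ Finset.Ico (m1 t ε D) t, phi t ε (F i) := by
          apply Finset.sum_congr rfl
          intro i hi
          rw [Finset.mem_Ico] at hi
          rw [h1 i hi.1 hi.2]
      _ ≤ ∑ i ∈ Finset.range t, phi t ε (F i) := by
          apply Finset.sum_le_sum_of_subset_of_nonneg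
          · rw [Finset.range_eq_Ico]
            exact Finset.Ico_subset_Ico (by omega) le_rfl
          · intro _ _ _; exact phi_nonneg _
  · calc ∑ i ∈ Finset.range t, phi t ε (F i)
        = ∑ i ∈ Finset.Ico 0 (m2 t ε D), phi t ε (F i)
          + ∑ i ∈ Finset.Ico (m2 t ε D) t, phi t ε (F i) := by
          rw [Finset.range_eq_Ico, ← Finset.sum_Ico_consecutive _ (by omega : 0 ≤ m2 t ε D) hm2t]
      _ = 0 + ∑ i ∈ Finset.Ico (m2 t ε D) t, phi t ε (F i) := by
          congr 1
          apply Finset.sum_eq_zero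
          intro i hi
          rw [Finset.mem_Ico] at hi
          exact h0 i hi.2
      _ ≤ 0 + ∑ i ∈ Finset.Ico (m2 t ε D) t, (1:ℝ) := by
          apply add_le_add le_rfl
          apply Finset.sum_le_sum
          intro i _
          exact phi_le_one _
      _ = (t:ℝ) - m2 t ε D := by
          rw [Finset.sum_const, Nat.card_Ico]
          rw [nsmul_eq_mul, mul_one, Nat.cast_sub hm2t]
          ring

end WithWitness

end Up

section Up2
variable {t : ℕ} {ε : ℝ}

section WithWitness2
variable (ht : 2 < t) (hε : 0 < ε) {D : PMF (Fin (t-1) × Bool)} {m : Fin t}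
  (hm : popLoss D (fun x => decide ((m:ℕ) ≤ (x:ℕ))) = 0)
include ht hε hm

lemma ctrue_bounds :
    (t:ℝ) - m1 t ε D ≤ ctrue t ε D ∧ ctrue t ε D ≤ (t:ℝ) - m2 t ε D := by
  apply csum_bounds ht hε hm (TR t D)
  · intro i h1i _
    apply phi_one ht hε
    have := TR_antitone t D h1i
    have := m1_spec ht hε hm
    have := (etaP_pos ht hε).le
    linarith
  · intro i h0i
    apply phi_zero ht hε
    have := m2_min ht hε hm h0i
    have := (etaP_pos ht hε).le
    linarith

lemma chat_bounds {n : ℕ} (S : Sample (Fin (t-1)) n)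
    (hS : ∀ i ∈ Finset.range t, |hatT t i S - TR t D i| ≤ etaP t ε) :
    (t:ℝ) - m1 t ε D ≤ chat t ε S ∧ chat t ε S ≤ (t:ℝ) - m2 t ε D := by
  apply csum_bounds ht hε hm (fun i => hatT t i S)
  · intro i h1i hit
    apply phi_one ht hε
    have hd := abs_le.mp (hS i (Finset.mem_range.mpr hit))
    have := TR_antitone t D h1i
    have := m1_spec ht hε hm
    linarith [hd.2]
  · intro i h0i
    have hit : i < t := by
      have := m2_le_m1 ht hε hm
      have := m1_le ht hε hm
      have := m.isLt
      omega
    apply phi_zero ht hε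
    have hd := abs_le.mp (hS i (Finset.mem_range.mpr hit))
    have := m2_min ht hε hm h0i
    linarith [hd.1]

lemma chat_close {n : ℕ} (S : Sample (Fin (t-1)) n)
    (hS : ∀ i ∈ Finset.range t, |hatT t i S - TR t D i| ≤ etaP t ε) :
    |chat t ε S - ctrue t ε D| ≤ 1/8 := by
  have hd := dgap_pos ht hε
  have hd4 := dgap_ge ht hε
  have he := eP_pos (ε := ε) hε
  have htR : (3:ℝ) ≤ t := by exact_mod_cast ht
  calc |chat t ε S - ctrue t ε D|
      = |∑ i ∈ Finset.range t, (phi t ε (hatT t i S) - phi t ε (TR t D i))| := by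
        rw [chat, ctrue, Finset.sum_sub_distrib]
    _ ≤ ∑ i ∈ Finset.range t, |phi t ε (hatT t i S) - phi t ε (TR t D i)| :=
        Finset.abs_sum_le_sum_abs _ _
    _ ≤ ∑ i ∈ Finset.range t, etaP t ε / dgap t ε := by
        apply Finset.sum_le_sum
        intro i hi
        calc |phi t ε (hatT t i S) - phi t ε (TR t D i)|
            ≤ |hatT t i S - TR t D i| / dgap t ε := phi_lip ht hε _ _
          _ ≤ etaP t ε / dgap t ε := by gcongr; exact hS i hi
    _ = (t:ℝ) * (etaP t ε / dgap t ε) := by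
        rw [Finset.sum_const, Finset.card_range, nsmul_eq_mul]
    _ ≤ 1/8 := by
        have htpos : (0:ℝ) < t := by linarith
        have h1 : (t:ℝ) * (etaP t ε / dgap t ε) = (eP ε / 32) / dgap t ε := by
          rw [etaP]
          field_simp
        rw [h1]
        have h2 : (eP ε / 32) / dgap t ε ≤ (eP ε / 32) / (eP ε / 4) := by
          apply div_le_div_of_nonneg_left (by positivity) (by positivity) hd4
        have h3 : (eP ε / 32) / (eP ε / 4) = 1/8 := by
          field_simp
          ring
        linarith

lemma ceil_bounds {n : ℕ} (S : Sample (Fin (t-1)) n)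
    (hS : ∀ i ∈ Finset.range t, |hatT t i S - TR t D i| ≤ etaP t ε) :
    ((t:ℤ) - m1 t ε D ≤ ⌈chat t ε S⌉ ∧ ⌈chat t ε S⌉ ≤ (t:ℤ) - m2 t ε D) ∧
    (⌈ctrue t ε D - 1/8⌉ ≤ ⌈chat t ε S⌉ ∧ ⌈chat t ε S⌉ ≤ ⌈ctrue t ε D - 1/8⌉ + 1) := by
  obtain ⟨hcl, hcu⟩ := chat_bounds ht hε hm S hS
  obtain ⟨hclose⟩ := And.intro (chat_close ht hε hm S hS) trivial
  have habs := abs_le.mp hclose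
  refine ⟨⟨?_, ?_⟩, ?_, ?_⟩
  · have : (((t:ℤ) - m1 t ε D : ℤ) : ℝ) ≤ chat t ε S := by push_cast; linarith
    calc ((t:ℤ) - m1 t ε D) = ⌈(((t:ℤ) - m1 t ε D : ℤ) : ℝ)⌉ := (Int.ceil_intCast _).symm
      _ ≤ ⌈chat t ε S⌉ := Int.ceil_mono this
  · apply Int.ceil_le.mpr
    push_cast
    linarith
  · apply Int.ceil_mono
    linarith [habs.1]
  · calc ⌈chat t ε S⌉ ≤ ⌈(ctrue t ε D - 1/8) + 1⌉ := Int.ceil_mono (by linarith [habs.2])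
      _ = ⌈ctrue t ε D - 1/8⌉ + 1 := Int.ceil_add_one _

end WithWitness2

lemma bad_bound (ht : 2 < t) (hε : 0 < ε) (D : PMF (Fin (t-1) × Bool)) {n : ℕ} (hn : 0 < n) :
    ∑ S ∈ Finset.univ.filter (fun S : Sample (Fin (t-1)) n =>
        ¬ ∀ i ∈ Finset.range t, |hatT t i S - TR t D i| ≤ etaP t ε), PR D S
      ≤ t / (4 * n * (etaP t ε)^2) := by
  have hηp := etaP_pos ht hε
  have hfe : Finset.univ.filter (fun S : Sample (Fin (t-1)) n =>
        ¬ ∀ i ∈ Finset.range t, |hatT t i S - TR t D i| ≤ etaP t ε)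
      = Finset.univ.filter (fun S : Sample (Fin (t-1)) n =>
        ∃ i ∈ Finset.range t, etaP t ε < |hatT t i S - TR t D i|) := by
    apply Finset.filter_congr
    intro S _
    constructor
    · intro h
      push_neg at h
      exact h
    · intro h
      push_neg
      exact h
  rw [hfe]
  calc ∑ S ∈ Finset.univ.filter (fun S : Sample (Fin (t-1)) n =>
        ∃ i ∈ Finset.range t, etaP t ε < |hatT t i S - TR t D i|), PR D S
      ≤ ∑ i ∈ Finset.range t, ∑ S ∈ Finset.univ.filter
          (fun S : Sample (Fin (t-1)) n => etaP t ε < |hatT t i S - TR t D i|), PR D S :=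
        union_bound (PR D) (PR_nonneg D) _ t
    _ ≤ ∑ _i ∈ Finset.range t, 1 / (4 * n * (etaP t ε)^2) := by
        apply Finset.sum_le_sum
        intro i _
        apply chebyshev D (Wneg t i) hn hηp
        intro S hS
        rw [Finset.mem_filter] at hS
        have h2 := hS.2
        unfold hatT cnt TR at h2
        exact h2
    _ = t / (4 * n * (etaP t ε)^2) := by
        rw [Finset.sum_const, Finset.card_range, nsmul_eq_mul, mul_one_div]

lemma WE_eq_ofReal_PR {Z : Type*} [Fintype Z] (D : PMF Z) {n : ℕ} (S : Fin n → Z) :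
    (∏ k, D (S k)) = ENNReal.ofReal (PR D S) := by
  rw [PR, ← ENNReal.toReal_prod]
  exact (ENNReal.ofReal_toReal (ENNReal.prod_lt_top (fun k _ => lt_top_iff_ne_top.mpr (D_ne_top D (S k)))).ne).symm

lemma outProb_ge_good {t : ℕ} {n : ℕ} (D : PMF (Fin (t-1) × Bool))
    (out : Sample (Fin (t-1)) n → (Fin (t-1) → Bool)) (E : Set (Fin (t-1) → Bool))
    (Gd : Finset (Sample (Fin (t-1)) n)) (hGd : ∀ S ∈ Gd, out S ∈ E) :
    ∑ S ∈ Gd, (∏ k, D (S k)) ≤ outProb D (fun S => PMF.pure (out S)) E := by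
  rw [outProb, tsum_fintype]
  calc ∑ S ∈ Gd, (∏ k, D (S k))
      = ∑ S ∈ Gd, (∏ k, D (S k)) * (PMF.pure (out S)).toOuterMeasure E := by
        apply Finset.sum_congr rfl
        intro S hS
        rw [PMF.toOuterMeasure_pure_apply, if_pos (hGd S hS), mul_one]
    _ ≤ ∑ S : Sample (Fin (t-1)) n, (∏ k, D (S k)) * (PMF.pure (out S)).toOuterMeasure E :=
        Finset.sum_le_sum_of_subset (Finset.subset_univ _)

theorem upper_bound (t : ℕ) (ht : 2 < t) (ε : ℝ) (hε : 0 < ε) :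
    IsProperListLearner (thresholdClass t) (algo t ε) ε 2 := by
  constructor
  · intro n S
    rw [algo]
    rw [PMF.support_pure]
    intro f hf
    rw [Set.mem_singleton_iff] at hf
    rw [hf]
    exact thr_mem t (by omega) _
  · intro δ hδ
    have hηp := etaP_pos (ε := ε) ht hε
    set η := etaP t ε with hηdef
    refine ⟨max 1 ⌈(t:ℝ)/(4*δ*η^2)⌉₊, ?_⟩
    set n := max 1 ⌈(t:ℝ)/(4*δ*η^2)⌉₊ with hndef
    have hn0 : 0 < n := lt_of_lt_of_le one_pos (le_max_left _ _)
    have harith : (t:ℝ) / (4 * n * η^2) ≤ δ := by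
      have hnc : ((t:ℝ)/(4*δ*η^2)) ≤ n := by
        calc ((t:ℝ)/(4*δ*η^2)) ≤ (⌈(t:ℝ)/(4*δ*η^2)⌉₊ : ℝ) := Nat.le_ceil _
          _ ≤ n := by exact_mod_cast le_max_right 1 _
      have h1 : (0:ℝ) < 4*δ*η^2 := by positivity
      have h2 : (0:ℝ) < 4*(n:ℝ)*η^2 := by positivity
      rw [div_le_iff₀ h1] at hnc
      rw [div_le_iff₀ h2]
      nlinarith
    intro D hD
    obtain ⟨m, hm⟩ := exists_zero_loss t (by omega) D hD
    have hm1m := m1_le ht hε hm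
    have hm21 := m2_le_m1 ht hε hm
    have hm1t : m1 t ε D ≤ t - 1 := by have := m.isLt; omega
    set M1 := m1 t ε D with hM1
    set M2 := m2 t ε D with hM2
    set g : ℤ := ⌈ctrue t ε D - 1/8⌉ with hg
    -- the 2-element list
    refine ⟨fun ℓ => thr t (((t:ℤ) - max ((t:ℤ) - M1) (min ((t:ℤ) - M2) (g + (ℓ:ℕ)))).toNat),
      ?_, ?_, ?_⟩
    · intro ℓ
      exact thr_mem t (by omega) _
    · -- loss of each list element
      intro ℓ
      set C : ℤ := max ((t:ℤ) - M1) (min ((t:ℤ) - M2) (g + (ℓ:ℕ))) with hC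
      have hCrange : (t:ℤ) - M1 ≤ C ∧ C ≤ (t:ℤ) - M2 := by
        constructor
        · exact le_max_left _ _
        · apply max_le
          · omega
          · exact min_le_left _ _
      set j : ℕ := ((t:ℤ) - C).toNat with hj
      have hjr : M2 ≤ j ∧ j ≤ M1 := by omega
      calc popLoss D (thr t j) ≤ ENNReal.ofReal (TR t D j) := loss_le (by omega) hm (by omega)
        _ ≤ ENNReal.ofReal ε := by
            apply ENNReal.ofReal_le_ofReal
            have h1 : TR t D j ≤ TR t D M2 := TR_antitone t D hjr.1
            have h2 := m2_spec ht hε hm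
            have h3 : eP ε ≤ ε := eP_le
            rw [← hM2] at h2
            linarith
    · -- output probability
      set Gd : Finset (Sample (Fin (t-1)) n) := Finset.univ.filter
        (fun S => ∀ i ∈ Finset.range t, |hatT t i S - TR t D i| ≤ η) with hGd
      have hmem : ∀ S ∈ Gd, thr t (outIdx t ε S) ∈ Set.range
          (fun ℓ : Fin 2 => thr t (((t:ℤ) - max ((t:ℤ) - M1) (min ((t:ℤ) - M2) (g + (ℓ:ℕ)))).toNat)) := by
        intro S hS
        rw [hGd, Finset.mem_filter] at hS
        obtain ⟨⟨hc1, hc2⟩, hc3, hc4⟩ := ceil_bounds ht hε hm S hS.2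
        rw [← hM1] at hc1
        rw [← hM2] at hc2
        rw [← hg] at hc3 hc4
        set C : ℤ := ⌈chat t ε S⌉ with hCs
        have hone : (1:ℤ) ≤ (t:ℤ) - M1 := by omega
        have hC1 : 1 ≤ C := le_trans hone hc1
        have houtidx : outIdx t ε S = ((t:ℤ) - C).toNat := by
          rw [outIdx, ← hCs]
          omega
        rcases (by omega : C = g ∨ C = g + 1) with hCg | hCg
        · refine ⟨0, ?_⟩
          simp only [Fin.val_zero, Nat.cast_zero, add_zero]
          rw [houtidx]
          have h5 : min ((t:ℤ) - M2) g = g := min_eq_right (by rw [← hCg]; exact hc2)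
          have h6 : max ((t:ℤ) - M1) (min ((t:ℤ) - M2) g) = g := by
            rw [h5]; exact max_eq_right (by rw [← hCg]; exact hc1)
          rw [h6, hCg]
        · refine ⟨1, ?_⟩
          simp only [Fin.val_one, Nat.cast_one]
          rw [houtidx]
          have h5 : min ((t:ℤ) - M2) (g+1) = g+1 := min_eq_right (by rw [← hCg]; exact hc2)
          have h6 : max ((t:ℤ) - M1) (min ((t:ℤ) - M2) (g+1)) = g+1 := by
            rw [h5]; exact max_eq_right (by rw [← hCg]; exact hc1)
          rw [h6, hCg]
      calc ENNReal.ofReal (1 - δ) ≤ ENNReal.ofReal (∑ S ∈ Gd, PR D S) := by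
            apply ENNReal.ofReal_le_ofReal
            have hsplit := Finset.sum_filter_add_sum_filter_not Finset.univ
              (fun S : Sample (Fin (t-1)) n => ∀ i ∈ Finset.range t, |hatT t i S - TR t D i| ≤ η)
              (PR D)
            rw [sum_PR D n] at hsplit
            have hbad := bad_bound ht hε D hn0
            rw [← hηdef] at hbad
            have hb2 : ∑ S ∈ Finset.univ.filter (fun S : Sample (Fin (t-1)) n =>
                ¬ ∀ i ∈ Finset.range t, |hatT t i S - TR t D i| ≤ η), PR D S ≤ δ :=
              le_trans hbad harith
            rw [← hGd] at hsplit
            linarith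
        _ = ∑ S ∈ Gd, (∏ k, D (S k)) := by
            rw [ENNReal.ofReal_sum_of_nonneg (fun S _ => PR_nonneg D S)]
            apply Finset.sum_congr rfl
            intro S _
            exact (WE_eq_ofReal_PR D S).symm
        _ ≤ outProb D (algo t ε n) (Set.range _) := outProb_ge_good D _ _ Gd hmem


end Up2

end Aux

section Low
open Finset
variable {t : ℕ}

/-- piecewise-linear path of distributions: four tent masses -/
noncomputable def massF (ht : 2 < t) (p : ℝ) (z : Fin (t-1) × Bool) : ℝ :=
  (if z = ((⟨0, by omega⟩ : Fin (t-1)), true) then max 0 (1-p) else 0)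
  + (if z = ((⟨1, by omega⟩ : Fin (t-1)), true) then max 0 (min p (2-p)) else 0)
  + (if z = ((⟨0, by omega⟩ : Fin (t-1)), false) then max 0 (min (p-1) (3-p)) else 0)
  + (if z = ((⟨1, by omega⟩ : Fin (t-1)), false) then max 0 (p-2) else 0)

lemma massF_nonneg (ht : 2 < t) (p : ℝ) (z : Fin (t-1) × Bool) : 0 ≤ massF ht p z := by
  unfold massF
  have h : ∀ (c : Prop) [Decidable c] (a : ℝ), 0 ≤ a → 0 ≤ (if c then a else 0) := by
    intro c _ a ha
    split_ifs <;> simp [ha]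
  apply add_nonneg
  apply add_nonneg
  apply add_nonneg
  all_goals exact h _ _ (le_max_left _ _)

lemma massF_sum (ht : 2 < t) {p : ℝ} (hp : p ∈ Set.Icc (0:ℝ) 3) :
    ∑ z : Fin (t-1) × Bool, massF ht p z = 1 := by
  have hzz : ((⟨0, by omega⟩ : Fin (t-1)), true) ≠ ((⟨1, by omega⟩ : Fin (t-1)), true) := by
    simp [Prod.ext_iff, Fin.ext_iff]
  unfold massF
  rw [Finset.sum_add_distrib, Finset.sum_add_distrib, Finset.sum_add_distrib]
  rw [Finset.sum_ite_eq' Finset.univ ((⟨0, by omega⟩ : Fin (t-1)), true)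
      (fun _ => max 0 (1-p)),
    Finset.sum_ite_eq' Finset.univ ((⟨1, by omega⟩ : Fin (t-1)), true)
      (fun _ => max 0 (min p (2-p))),
    Finset.sum_ite_eq' Finset.univ ((⟨0, by omega⟩ : Fin (t-1)), false)
      (fun _ => max 0 (min (p-1) (3-p))),
    Finset.sum_ite_eq' Finset.univ ((⟨1, by omega⟩ : Fin (t-1)), false)
      (fun _ => max 0 (p-2))]
  simp only [Finset.mem_univ, if_pos]
  obtain ⟨hp0, hp3⟩ := hp
  rcases le_or_gt p 1 with h1 | h1
  · rw [max_eq_right (by linarith : (0:ℝ) ≤ 1 - p),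
      min_eq_left (by linarith : p ≤ 2 - p),
      max_eq_right hp0,
      max_eq_left (le_trans (min_le_left _ _) (by linarith : p - 1 ≤ 0)),
      max_eq_left (by linarith : p - 2 ≤ 0)]
    ring
  · rcases le_or_gt p 2 with h2 | h2
    · rw [max_eq_left (by linarith : 1 - p ≤ 0),
        min_eq_right (by linarith : 2 - p ≤ p),
        max_eq_right (by linarith : (0:ℝ) ≤ 2 - p),
        min_eq_left (by linarith : p - 1 ≤ 3 - p),
        max_eq_right (by linarith : (0:ℝ) ≤ p - 1),
        max_eq_left (by linarith : p - 2 ≤ 0)]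
      ring
    · rw [max_eq_left (by linarith : 1 - p ≤ 0),
        min_eq_right (by linarith : 2 - p ≤ p),
        max_eq_left (by linarith : 2 - p ≤ 0),
        min_eq_right (by linarith : 3 - p ≤ p - 1),
        max_eq_right (by linarith : (0:ℝ) ≤ 3 - p),
        max_eq_right (by linarith : (0:ℝ) ≤ p - 2)]
      ring

noncomputable def Dp (ht : 2 < t) (p : ℝ) (hp : p ∈ Set.Icc (0:ℝ) 3) :
    PMF (Fin (t-1) × Bool) :=
  PMF.ofFintype (fun z => ENNReal.ofReal (massF ht p z)) (by
    rw [← ENNReal.ofReal_sum_of_nonneg (fun z _ => massF_nonneg ht p z), massF_sum ht hp,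
      ENNReal.ofReal_one])

lemma Dp_apply (ht : 2 < t) (p : ℝ) (hp : p ∈ Set.Icc (0:ℝ) 3) (z : Fin (t-1) × Bool) :
    Dp ht p hp z = ENNReal.ofReal (massF ht p z) := PMF.ofFintype_apply _ _

lemma Dp_realizable (ht : 2 < t) (p : ℝ) (hp : p ∈ Set.Icc (0:ℝ) 3) :
    Realizable (thresholdClass t) (Dp ht p hp) := by
  have hp0 : (0:ℝ) ≤ p := hp.1
  have hp3 : p ≤ 3 := hp.2
  have hzero : ∃ h ∈ thresholdClass t, popLoss (Dp ht p hp) h = 0 := by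
    rcases le_or_gt p 1 with h1 | h1
    · refine ⟨fun x : Fin (t-1) => decide (((⟨0, by omega⟩ : Fin t) : ℕ) ≤ (x:ℕ)),
        ⟨⟨0, by omega⟩, rfl⟩, ?_⟩
      rw [popLoss_eq_sum]
      apply Finset.sum_eq_zero
      intro z _
      split_ifs with herr
      · have hz2 : z.2 = false := by
          rcases Bool.eq_false_or_eq_true z.2 with h | h
          · exfalso; apply herr; rw [h]; simp
          · exact h
        rw [Dp_apply, ENNReal.ofReal_eq_zero]
        have e3 : max 0 (min (p-1) (3-p)) = (0:ℝ) :=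
          max_eq_left (le_trans (min_le_left _ _) (by linarith))
        have e4 : max 0 (p-2) = (0:ℝ) := max_eq_left (by linarith)
        obtain ⟨x, b⟩ := z
        simp only at hz2
        subst hz2
        simp [massF, e3, e4]
      · rfl
    · rcases le_or_gt p 2 with h2 | h2
      · refine ⟨fun x : Fin (t-1) => decide (((⟨1, by omega⟩ : Fin t) : ℕ) ≤ (x:ℕ)),
          ⟨⟨1, by omega⟩, rfl⟩, ?_⟩
        rw [popLoss_eq_sum]
        apply Finset.sum_eq_zero
        intro z _
        split_ifs with herr
        · rw [Dp_apply, ENNReal.ofReal_eq_zero]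
          have e1 : max 0 (1-p) = (0:ℝ) := max_eq_left (by linarith)
          have e4 : max 0 (p-2) = (0:ℝ) := max_eq_left (by linarith)
          have hza2 : z ≠ ((⟨1, by omega⟩ : Fin (t-1)), true) := by
            intro hz; subst hz; simp at herr
          have hza3 : z ≠ ((⟨0, by omega⟩ : Fin (t-1)), false) := by
            intro hz; subst hz; simp at herr
          unfold massF
          rw [if_neg hza2, if_neg hza3]
          simp [e1, e4]
        · rfl
      · refine ⟨fun x : Fin (t-1) => decide (((⟨2, by omega⟩ : Fin t) : ℕ) ≤ (x:ℕ)),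
          ⟨⟨2, by omega⟩, rfl⟩, ?_⟩
        rw [popLoss_eq_sum]
        apply Finset.sum_eq_zero
        intro z _
        split_ifs with herr
        · rw [Dp_apply, ENNReal.ofReal_eq_zero]
          have e1 : max 0 (1-p) = (0:ℝ) := max_eq_left (by linarith)
          have e2 : max 0 (min p (2-p)) = (0:ℝ) :=
            max_eq_left (le_trans (min_le_right _ _) (by linarith))
          have hza3 : z ≠ ((⟨0, by omega⟩ : Fin (t-1)), false) := by
            intro hz; subst hz; simp at herr
          have hza4 : z ≠ ((⟨1, by omega⟩ : Fin (t-1)), false) := by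
            intro hz; subst hz; simp at herr
          unfold massF
          rw [if_neg hza3, if_neg hza4]
          simp [e1, e2]
        · rfl
  obtain ⟨h, hmem, h0⟩ := hzero
  intro ε' hε'
  exact ⟨h, hmem, by rw [h0]; exact hε'⟩

end Low

section Low2
open Finset
variable {t : ℕ}

lemma pmf_measure_le_one {α : Type*} (q : PMF α) (E : Set α) : q.toOuterMeasure E ≤ 1 := by
  rw [PMF.toOuterMeasure_apply]
  calc ∑' x, E.indicator (⇑q) x ≤ ∑' x, q x :=
        ENNReal.tsum_le_tsum (fun x => Set.indicator_le_self _ _ x)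
    _ = 1 := q.tsum_coe

lemma outProb_le_one {n : ℕ} (D : PMF (Fin (t-1) × Bool))
    (Af : Sample (Fin (t-1)) n → PMF (Fin (t-1) → Bool)) (E : Set (Fin (t-1) → Bool)) :
    outProb D Af E ≤ 1 := by
  rw [outProb, tsum_fintype]
  calc ∑ S : Sample (Fin (t-1)) n, (∏ k, D (S k)) * (Af S).toOuterMeasure E
      ≤ ∑ S : Sample (Fin (t-1)) n, (∏ k, D (S k)) * 1 := by
        apply Finset.sum_le_sum
        intro S _
        exact mul_le_mul_right (pmf_measure_le_one _ _) _
    _ = 1 := by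
        simp only [mul_one]
        exact sum_WE D n

lemma outProb_ne_top {n : ℕ} (D : PMF (Fin (t-1) × Bool))
    (Af : Sample (Fin (t-1)) n → PMF (Fin (t-1) → Bool)) (E : Set (Fin (t-1) → Bool)) :
    outProb D Af E ≠ ⊤ :=
  ne_top_of_le_ne_top ENNReal.one_ne_top (outProb_le_one D Af E)

lemma sum_two_le {n : ℕ} (D : PMF (Fin (t-1) × Bool))
    (Af : Sample (Fin (t-1)) n → PMF (Fin (t-1) → Bool)) {h h' : Fin (t-1) → Bool}
    (hne : h ≠ h') : outProb D Af {h} + outProb D Af {h'} ≤ 1 := by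
  rw [outProb, outProb, tsum_fintype, tsum_fintype, ← Finset.sum_add_distrib]
  calc ∑ S : Sample (Fin (t-1)) n, ((∏ k, D (S k)) * (Af S).toOuterMeasure {h}
          + (∏ k, D (S k)) * (Af S).toOuterMeasure {h'})
      ≤ ∑ S : Sample (Fin (t-1)) n, (∏ k, D (S k)) * 1 := by
        apply Finset.sum_le_sum
        intro S _
        rw [← mul_add]
        apply mul_le_mul_right
        rw [PMF.toOuterMeasure_apply_singleton, PMF.toOuterMeasure_apply_singleton]
        calc (Af S) h + (Af S) h' = ∑ f ∈ ({h, h'} : Finset (Fin (t-1) → Bool)), (Af S) f :=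
              (Finset.sum_pair hne).symm
          _ ≤ ∑' f, (Af S) f := Summable.sum_le_tsum _ (fun _ _ => zero_le) ENNReal.summable
          _ = 1 := (Af S).tsum_coe
    _ = 1 := by
        simp only [mul_one]
        exact sum_WE D n

lemma sum_two_le_real {n : ℕ} (D : PMF (Fin (t-1) × Bool))
    (Af : Sample (Fin (t-1)) n → PMF (Fin (t-1) → Bool)) {h h' : Fin (t-1) → Bool}
    (hne : h ≠ h') :
    (outProb D Af {h}).toReal + (outProb D Af {h'}).toReal ≤ 1 := by
  have hsum := sum_two_le D Af hne
  have h1 := outProb_ne_top D Af {h}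
  have h2 := outProb_ne_top D Af {h'}
  have := ENNReal.toReal_mono ENNReal.one_ne_top hsum
  rwa [ENNReal.toReal_add h1 h2, ENNReal.toReal_one] at this

lemma outProb_singleton_toReal {n : ℕ} (D : PMF (Fin (t-1) × Bool))
    (Af : Sample (Fin (t-1)) n → PMF (Fin (t-1) → Bool)) (h : Fin (t-1) → Bool) :
    (outProb D Af {h}).toReal
      = ∑ S : Sample (Fin (t-1)) n, PR D S * ((Af S) h).toReal := by
  rw [outProb, tsum_fintype]
  rw [ENNReal.toReal_sum]
  · apply Finset.sum_congr rfl
    intro S _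
    rw [ENNReal.toReal_mul, PMF.toOuterMeasure_apply_singleton, PR, ENNReal.toReal_prod]
  · intro S _
    apply ENNReal.mul_ne_top
    · exact (ENNReal.prod_lt_top (fun k _ => lt_top_iff_ne_top.mpr (D_ne_top D (S k)))).ne
    · exact ne_top_of_le_ne_top ENNReal.one_ne_top (pmf_measure_le_one _ _)

-- tent Lipschitz bounds
lemma lip_max0 (a b : ℝ) : |max 0 a - max 0 b| ≤ |a - b| := by
  rw [max_comm 0 a, max_comm 0 b]
  exact abs_max_sub_max_le_abs _ _ _

lemma massF_tv (ht : 2 < t) (p q : ℝ) :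
    ∑ z : Fin (t-1) × Bool, |massF ht p z - massF ht q z| ≤ 4 * |p - q| := by
  have habs : ∀ z : Fin (t-1) × Bool, |massF ht p z - massF ht q z|
      ≤ (if z = ((⟨0, by omega⟩ : Fin (t-1)), true) then |p-q| else 0)
        + (if z = ((⟨1, by omega⟩ : Fin (t-1)), true) then |p-q| else 0)
        + (if z = ((⟨0, by omega⟩ : Fin (t-1)), false) then |p-q| else 0)
        + (if z = ((⟨1, by omega⟩ : Fin (t-1)), false) then |p-q| else 0) := by
    intro z
    unfold massF
    have step : ∀ (c₁ c₂ c₃ c₄ : Prop) [Decidable c₁] [Decidable c₂] [Decidable c₃] [Decidable c₄]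
        (a₁ b₁ a₂ b₂ a₃ b₃ a₄ b₄ : ℝ),
        |a₁ - b₁| ≤ |p - q| → |a₂ - b₂| ≤ |p - q| → |a₃ - b₃| ≤ |p - q| → |a₄ - b₄| ≤ |p - q| →
        |((if c₁ then a₁ else 0) + (if c₂ then a₂ else 0) + (if c₃ then a₃ else 0)
            + (if c₄ then a₄ else 0))
          - ((if c₁ then b₁ else 0) + (if c₂ then b₂ else 0) + (if c₃ then b₃ else 0)
            + (if c₄ then b₄ else 0))|
        ≤ (if c₁ then |p-q| else 0) + (if c₂ then |p-q| else 0) + (if c₃ then |p-q| else 0)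
            + (if c₄ then |p-q| else 0) := by
      intro c₁ c₂ c₃ c₄ _ _ _ _ a₁ b₁ a₂ b₂ a₃ b₃ a₄ b₄ h₁ h₂ h₃ h₄
      have key : ∀ (c : Prop) [Decidable c] (a b : ℝ), |a - b| ≤ |p - q| →
          |(if c then a else 0) - (if c then b else 0)| ≤ (if c then |p-q| else 0) := by
        intro c _ a b hab
        split_ifs
        · exact hab
        · simp
      calc |((if c₁ then a₁ else 0) + (if c₂ then a₂ else 0) + (if c₃ then a₃ else 0)
            + (if c₄ then a₄ else 0))
          - ((if c₁ then b₁ else 0) + (if c₂ then b₂ else 0) + (if c₃ then b₃ else 0)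
            + (if c₄ then b₄ else 0))|
          = |(((if c₁ then a₁ else 0) - (if c₁ then b₁ else 0))
              + ((if c₂ then a₂ else 0) - (if c₂ then b₂ else 0)))
              + (((if c₃ then a₃ else 0) - (if c₃ then b₃ else 0))
              + ((if c₄ then a₄ else 0) - (if c₄ then b₄ else 0)))| := by ring_nf
        _ ≤ _ := by
            have t1 := key c₁ a₁ b₁ h₁
            have t2 := key c₂ a₂ b₂ h₂
            have t3 := key c₃ a₃ b₃ h₃
            have t4 := key c₄ a₄ b₄ h₄
            calc _ ≤ |((if c₁ then a₁ else 0) - (if c₁ then b₁ else 0))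
                + ((if c₂ then a₂ else 0) - (if c₂ then b₂ else 0))|
                + |((if c₃ then a₃ else 0) - (if c₃ then b₃ else 0))
                + ((if c₄ then a₄ else 0) - (if c₄ then b₄ else 0))| := abs_add_le _ _
              _ ≤ (|(if c₁ then a₁ else 0) - (if c₁ then b₁ else 0)|
                  + |(if c₂ then a₂ else 0) - (if c₂ then b₂ else 0)|)
                + (|(if c₃ then a₃ else 0) - (if c₃ then b₃ else 0)|
                  + |(if c₄ then a₄ else 0) - (if c₄ then b₄ else 0)|) :=
                  add_le_add (abs_add_le _ _) (abs_add_le _ _)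
              _ ≤ _ := by linarith
    apply step
    · exact lip_max0 _ _ |>.trans (by rw [show (1-p) - (1-q) = -(p - q) by ring, abs_neg])
    · refine (lip_max0 _ _).trans ?_
      refine (abs_min_sub_min_le_max p (2-p) q (2-q)).trans ?_
      apply max_le le_rfl
      rw [show (2-p) - (2-q) = -(p - q) by ring, abs_neg]
    · refine (lip_max0 _ _).trans ?_
      refine (abs_min_sub_min_le_max (p-1) (3-p) (q-1) (3-q)).trans ?_
      apply max_le
      · rw [show (p-1) - (q-1) = p - q by ring]
      · rw [show (3-p) - (3-q) = -(p - q) by ring, abs_neg]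
    · refine (lip_max0 _ _).trans ?_
      rw [show (p-2) - (q-2) = p - q by ring]
  calc ∑ z : Fin (t-1) × Bool, |massF ht p z - massF ht q z|
      ≤ ∑ z : Fin (t-1) × Bool,
        ((if z = ((⟨0, by omega⟩ : Fin (t-1)), true) then |p-q| else 0)
        + (if z = ((⟨1, by omega⟩ : Fin (t-1)), true) then |p-q| else 0)
        + (if z = ((⟨0, by omega⟩ : Fin (t-1)), false) then |p-q| else 0)
        + (if z = ((⟨1, by omega⟩ : Fin (t-1)), false) then |p-q| else 0)) :=
        Finset.sum_le_sum (fun z _ => habs z)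
    _ = 4 * |p - q| := by
        rw [Finset.sum_add_distrib, Finset.sum_add_distrib, Finset.sum_add_distrib]
        rw [Finset.sum_ite_eq' Finset.univ _ (fun _ => |p-q|),
          Finset.sum_ite_eq' Finset.univ _ (fun _ => |p-q|),
          Finset.sum_ite_eq' Finset.univ _ (fun _ => |p-q|),
          Finset.sum_ite_eq' Finset.univ _ (fun _ => |p-q|)]
        simp only [Finset.mem_univ, if_pos]
        ring

lemma G_lip (ht : 2 < t) {n : ℕ}
    (Af : Sample (Fin (t-1)) n → PMF (Fin (t-1) → Bool)) (h : Fin (t-1) → Bool)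
    {p q : ℝ} (hp : p ∈ Set.Icc (0:ℝ) 3) (hq : q ∈ Set.Icc (0:ℝ) 3) :
    |(outProb (Dp ht p hp) Af {h}).toReal - (outProb (Dp ht q hq) Af {h}).toReal|
      ≤ 4 * n * |p - q| := by
  rw [outProb_singleton_toReal, outProb_singleton_toReal]
  have haS : ∀ S : Sample (Fin (t-1)) n, 0 ≤ ((Af S) h).toReal ∧ ((Af S) h).toReal ≤ 1 := by
    intro S
    constructor
    · exact ENNReal.toReal_nonneg
    · have := ENNReal.toReal_mono ENNReal.one_ne_top (PMF.coe_le_one (Af S) h)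
      rwa [ENNReal.toReal_one] at this
  calc |∑ S : Sample (Fin (t-1)) n, PR (Dp ht p hp) S * ((Af S) h).toReal
        - ∑ S : Sample (Fin (t-1)) n, PR (Dp ht q hq) S * ((Af S) h).toReal|
      = |∑ S : Sample (Fin (t-1)) n,
          (PR (Dp ht p hp) S - PR (Dp ht q hq) S) * ((Af S) h).toReal| := by
        rw [← Finset.sum_sub_distrib]
        congr 1
        apply Finset.sum_congr rfl
        intro S _
        ring
    _ ≤ ∑ S : Sample (Fin (t-1)) n,
          |(PR (Dp ht p hp) S - PR (Dp ht q hq) S) * ((Af S) h).toReal| :=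
        Finset.abs_sum_le_sum_abs _ _
    _ ≤ ∑ S : Sample (Fin (t-1)) n, |PR (Dp ht p hp) S - PR (Dp ht q hq) S| := by
        apply Finset.sum_le_sum
        intro S _
        rw [abs_mul]
        calc |PR (Dp ht p hp) S - PR (Dp ht q hq) S| * |((Af S) h).toReal|
            ≤ |PR (Dp ht p hp) S - PR (Dp ht q hq) S| * 1 := by
              apply mul_le_mul_of_nonneg_left _ (abs_nonneg _)
              rw [abs_of_nonneg (haS S).1]
              exact (haS S).2
          _ = _ := mul_one _
    _ ≤ n * ∑ z : Fin (t-1) × Bool, |(Dp ht p hp z).toReal - (Dp ht q hq z).toReal| := by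
        apply tv_prod n (fun z => (Dp ht p hp z).toReal) (fun z => (Dp ht q hq z).toReal)
        · intro z; exact ENNReal.toReal_nonneg
        · intro z; exact ENNReal.toReal_nonneg
        · exact sum_toReal_D _
        · exact sum_toReal_D _
    _ ≤ n * (4 * |p - q|) := by
        apply mul_le_mul_of_nonneg_left _ (Nat.cast_nonneg n)
        have : ∀ z : Fin (t-1) × Bool,
            |(Dp ht p hp z).toReal - (Dp ht q hq z).toReal| = |massF ht p z - massF ht q z| := by
          intro z
          rw [Dp_apply, Dp_apply, ENNReal.toReal_ofReal (massF_nonneg ht p z),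
            ENNReal.toReal_ofReal (massF_nonneg ht q z)]
        rw [Finset.sum_congr rfl (fun z _ => this z)]
        exact massF_tv ht p q
    _ = 4 * n * |p - q| := by ring

end Low2

section Low3
open Finset
variable {t : ℕ}

lemma forced {D : PMF (Fin (t-1) × Bool)} {z : Fin (t-1) × Bool} (hz : D z = 1)
    {h : Fin (t-1) → Bool} (hl : popLoss D h ≤ ENNReal.ofReal (1/2)) : h z.1 = z.2 := by
  by_contra hc
  have h1 : (1:ℝ≥0∞) ≤ popLoss D h := by
    rw [popLoss_eq_sum]
    calc (1:ℝ≥0∞) = (if h z.1 ≠ z.2 then D z else 0) := by rw [if_pos hc, hz]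
      _ ≤ _ := Finset.single_le_sum (f := fun z => if h z.1 ≠ z.2 then D z else 0)
          (fun _ _ => zero_le) (Finset.mem_univ z)
  have h3 : ENNReal.ofReal (1/2) < 1 := by
    rw [ENNReal.ofReal_lt_one]
    norm_num
  exact absurd (le_trans h1 hl) (not_le.mpr h3)

lemma lower_one (ht : 2 < t) :
    ¬ ∃ A : LearningRule (Fin (t-1)), IsProperListLearner (thresholdClass t) A (1/2) 1 := by
  rintro ⟨A, hprop, hlearn⟩
  obtain ⟨n, hn⟩ := hlearn (1/4) (by norm_num)
  set K : ℕ := 96 * (n + 1) with hK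
  have hK0 : 0 < K := by omega
  have hKR : (0:ℝ) < K := by exact_mod_cast hK0
  have hpp : ∀ k : ℕ, (3 * ((min k K : ℕ) : ℝ) / K) ∈ Set.Icc (0:ℝ) 3 := by
    intro k
    constructor
    · positivity
    · rw [div_le_iff₀ hKR]
      have : ((min k K : ℕ) : ℝ) ≤ K := by exact_mod_cast min_le_right k K
      linarith
  have hsel : ∀ k : ℕ, ∃ h : Fin (t-1) → Bool, h ∈ thresholdClass t ∧
      popLoss (Dp ht (3 * ((min k K : ℕ) : ℝ) / K) (hpp k)) h ≤ ENNReal.ofReal (1/2) ∧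
      (3/4 : ℝ) ≤ (outProb (Dp ht (3 * ((min k K : ℕ) : ℝ) / K) (hpp k)) (A n) {h}).toReal := by
    intro k
    obtain ⟨hs, hmem, hloss, hout⟩ := hn (Dp ht (3 * ((min k K : ℕ) : ℝ) / K) (hpp k))
      (Dp_realizable ht _ (hpp k))
    refine ⟨hs 0, hmem 0, hloss 0, ?_⟩
    have hrange : Set.range hs = {hs 0} := by
      rw [Set.range_unique]
      rfl
    rw [hrange] at hout
    have h2 := ENNReal.toReal_mono (outProb_ne_top _ _ _) hout
    rw [ENNReal.toReal_ofReal (by norm_num : (0:ℝ) ≤ 1 - 1/4)] at h2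
    linarith
  choose F hFmem hFloss hFout using hsel
  have hchain : ∀ k : ℕ, k ≤ K → F k = F 0 := by
    intro k
    induction k with
    | zero => intro _; rfl
    | succ k ih =>
      intro hk1
      have hkK : k < K := by omega
      have e1 : min k K = k := min_eq_left (by omega)
      have e2 : min (k+1) K = k+1 := min_eq_left (by omega)
      have hdiff : |3 * ((min k K : ℕ) : ℝ) / K - 3 * ((min (k+1) K : ℕ) : ℝ) / K| = 3 / K := by
        rw [e1, e2]
        push_cast
        have heq : 3 * (k:ℝ) / K - 3 * ((k:ℝ)+1) / K = -(3/K) := by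
          field_simp
          ring
        rw [heq, abs_neg, abs_of_nonneg (by positivity)]
      have hL := G_lip ht (A n) (F k) (hpp k) (hpp (k+1))
      rw [hdiff] at hL
      have hstep : 4 * (n:ℝ) * (3 / K) ≤ 1/8 := by
        have hKcast : (K:ℝ) = 96 * ((n:ℝ) + 1) := by
          rw [hK]
          push_cast
          ring
        rw [hKcast]
        have hpos : (0:ℝ) < 96 * ((n:ℝ)+1) := by positivity
        have heq : 4 * (n:ℝ) * (3 / (96 * ((n:ℝ)+1))) = (12 * n) / (96 * ((n:ℝ)+1)) := by
          ring
        rw [heq, div_le_iff₀ hpos]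
        linarith [Nat.cast_nonneg (α := ℝ) n]
      have h1 := hFout k
      have h2 := hFout (k+1)
      have habs := abs_le.mp hL
      have h58 : (5/8 : ℝ) ≤ (outProb (Dp ht (3 * ((min (k+1) K : ℕ) : ℝ) / K) (hpp (k+1)))
          (A n) {F k}).toReal := by
        linarith [habs.1]
      have heqF : F (k+1) = F k := by
        by_contra hne
        have hsum := sum_two_le_real (Dp ht (3 * ((min (k+1) K : ℕ) : ℝ) / K) (hpp (k+1)))
          (A n) hne
        linarith
      rw [heqF]
      exact ih (by omega)
  -- endpoints
  have hFK := hchain K le_rfl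
  have hz1 : Dp ht (3 * ((min 0 K : ℕ) : ℝ) / K) (hpp 0) ((⟨0, by omega⟩ : Fin (t-1)), true) = 1 := by
    rw [Dp_apply]
    have h0 : 3 * ((min 0 K : ℕ) : ℝ) / K = 0 := by simp
    rw [h0]
    have : massF ht 0 ((⟨0, by omega⟩ : Fin (t-1)), true) = 1 := by
      unfold massF
      rw [if_pos rfl, if_neg (by simp [Prod.ext_iff, Fin.ext_iff]),
        if_neg (by simp), if_neg (by simp)]
      norm_num
    rw [this, ENNReal.ofReal_one]
  have hz4 : Dp ht (3 * ((min K K : ℕ) : ℝ) / K) (hpp K) ((⟨1, by omega⟩ : Fin (t-1)), false) = 1 := by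
    rw [Dp_apply]
    have h3 : 3 * ((min K K : ℕ) : ℝ) / K = 3 := by
      rw [min_self]
      field_simp
    rw [h3]
    have : massF ht 3 ((⟨1, by omega⟩ : Fin (t-1)), false) = 1 := by
      unfold massF
      rw [if_neg (by simp), if_neg (by simp),
        if_neg (by simp [Prod.ext_iff, Fin.ext_iff]), if_pos rfl]
      norm_num
    rw [this, ENNReal.ofReal_one]
  have he0 : (F 0) ⟨0, by omega⟩ = true := forced hz1 (hFloss 0)
  have heK : (F K) ⟨1, by omega⟩ = false := forced hz4 (hFloss K)
  rw [hFK] at heK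
  obtain ⟨i, hFi⟩ := hFmem 0
  rw [hFi] at he0 heK
  simp only [decide_eq_true_eq, decide_eq_false_iff_not] at he0 heK
  omega

end Low3

/-- for every `t > 2`, the class of thresholds over `[t-1]` has proper list
replicability number exactly `2`. -/
theorem stmt_4 (t : ℕ) (ht : 2 < t) :
    properListNumber (thresholdClass t) = 2 := by
  rw [properListNumber]
  apply le_antisymm
  · apply sInf_le
    refine ⟨2, by norm_cast, fun ε hε => ⟨algo t ε, upper_bound t ht ε hε⟩⟩
  · apply le_sInf
    rintro L ⟨l, rfl, hl⟩
    by_contra hlt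
    push_neg at hlt
    have hl2 : l < 2 := by exact_mod_cast hlt
    interval_cases l
    · -- list size 0 is impossible
      obtain ⟨A, hprop, hrest⟩ := hl 1 one_pos
      obtain ⟨n, hn⟩ := hrest (1/2) (by norm_num)
      have hreal : Realizable (thresholdClass t)
          (PMF.pure ((⟨0, by omega⟩ : Fin (t-1)), true)) := by
        intro ε' hε'
        refine ⟨fun x : Fin (t-1) => decide (((⟨0, by omega⟩ : Fin t) : ℕ) ≤ (x:ℕ)),
          ⟨⟨0, by omega⟩, rfl⟩, ?_⟩
        have hz : popLoss (PMF.pure ((⟨0, by omega⟩ : Fin (t-1)), true))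
            (fun x : Fin (t-1) => decide (((⟨0, by omega⟩ : Fin t) : ℕ) ≤ (x:ℕ))) = 0 := by
          rw [popLoss_eq_sum]
          apply Finset.sum_eq_zero
          intro z _
          split_ifs with herr
          · have hzne : z ≠ ((⟨0, by omega⟩ : Fin (t-1)), true) := by
              intro hz
              subst hz
              simp at herr
            rw [PMF.pure_apply, if_neg hzne]
          · rfl
        rw [hz]
        exact hε'
      obtain ⟨hs, -, -, hout⟩ := hn _ hreal
      have hempty : Set.range hs = (∅ : Set (Fin (t-1) → Bool)) := by
        rw [Set.range_eq_empty_iff]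
        exact ⟨fun i => absurd i.2 (by omega)⟩
      rw [hempty] at hout
      have hzero : outProb (PMF.pure ((⟨0, by omega⟩ : Fin (t-1)), true)) (A n)
          (∅ : Set (Fin (t-1) → Bool)) = 0 := by
        rw [outProb, tsum_fintype]
        apply Finset.sum_eq_zero
        intro S _
        have : (A n S).toOuterMeasure (∅ : Set (Fin (t-1) → Bool)) = 0 := by
          rw [PMF.toOuterMeasure_apply]
          simp
        rw [this, mul_zero]
      rw [hzero] at hout
      exact absurd hout (not_le.mpr (ENNReal.ofReal_pos.mpr (by norm_num)))
    · -- list size 1 is impossible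
      exact lower_one ht (hl (1/2) (by norm_num))

end Replicability
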